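/- The polynomial f(x) = ∏_{k=0}^{15} (x² − √2·cos(2πk/16)·x + 1) is a monic polynomial with rational coefficients whose coefficient of x²⁴ equals 901/4; in particular f does not have integer coefficients. -/
import Mathlib

open Polynomial Real

noncomputable def QpAux : Polynomial ℚ :=
  C 1 + C 8*X^2 + C 34*X^4 + C 100*X^6 + C (901/4)*X^8 + C 409*X^10 + C (2465/4)*X^12
    + C (1567/2)*X^14 + C 848*X^16 + C (1567/2)*X^18 + C (2465/4)*X^20 + C 409*X^22
    + C (901/4)*X^24 + C 100*X^26 + C 34*X^28 + C 8*X^30 + X^32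

noncomputable def RpAux : Polynomial ℝ :=
  C 1 + C 8*X^2 + C 34*X^4 + C 100*X^6 + C (901/4)*X^8 + C 409*X^10 + C (2465/4)*X^12
    + C (1567/2)*X^14 + C 848*X^16 + C (1567/2)*X^18 + C (2465/4)*X^20 + C 409*X^22
    + C (901/4)*X^24 + C 100*X^26 + C 34*X^28 + C 8*X^30 + X^32

lemma QpAux_map : QpAux.map (algebraMap ℚ ℝ) = RpAux := by
  unfold QpAux RpAux
  simp only [Polynomial.map_add, Polynomial.map_mul, Polynomial.map_pow,
    Polynomial.map_X, Polynomial.map_C, Polynomial.map_one, eq_ratCast]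
  norm_num

lemma QpAux_monic : QpAux.Monic := by
  unfold QpAux
  monicity!

lemma QpAux_coeff24 : QpAux.coeff 24 = 901/4 := by
  unfold QpAux
  simp [coeff_add, coeff_C_mul, coeff_X_pow, coeff_C, Polynomial.coeff_one]

lemma RpAux_eval (x : ℝ) : RpAux.eval x =
    1 + 8*x^2 + 34*x^4 + 100*x^6 + (901/4)*x^8 + 409*x^10 + (2465/4)*x^12
      + (1567/2)*x^14 + 848*x^16 + (1567/2)*x^18 + (2465/4)*x^20 + 409*x^22
      + (901/4)*x^24 + 100*x^26 + 34*x^28 + 8*x^30 + x^32 := by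
  unfold RpAux
  simp

lemma key_eval (x : ℝ) :
    ∏ k ∈ Finset.range 16,
      (x ^ 2 - (Real.sqrt 2 * Real.cos (2 * π * k / 16)) * x + 1) =
    1 + 8*x^2 + 34*x^4 + 100*x^6 + (901/4)*x^8 + 409*x^10 + (2465/4)*x^12
      + (1567/2)*x^14 + 848*x^16 + (1567/2)*x^18 + (2465/4)*x^20 + 409*x^22
      + (901/4)*x^24 + 100*x^26 + 34*x^28 + 8*x^30 + x^32 := by
  have h0 : Real.cos (2*π*(0:ℝ)/16) = 1 := by
    rw [show (2*π*(0:ℝ)/16) = 0 by ring, Real.cos_zero]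
  have h1 : Real.cos (2*π*(1:ℝ)/16) = Real.cos (π/8) := by
    rw [show (2*π*(1:ℝ)/16) = π/8 by ring]
  have h2 : Real.cos (2*π*(2:ℝ)/16) = Real.sqrt 2 / 2 := by
    rw [show (2*π*(2:ℝ)/16) = π/4 by ring, Real.cos_pi_div_four]
  have h3 : Real.cos (2*π*(3:ℝ)/16) = Real.cos (3*π/8) := by
    rw [show (2*π*(3:ℝ)/16) = 3*π/8 by ring]
  have h4 : Real.cos (2*π*(4:ℝ)/16) = 0 := by
    rw [show (2*π*(4:ℝ)/16) = π/2 by ring, Real.cos_pi_div_two]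
  have h5 : Real.cos (2*π*(5:ℝ)/16) = -Real.cos (3*π/8) := by
    rw [show (2*π*(5:ℝ)/16) = π - 3*π/8 by ring, Real.cos_pi_sub]
  have h6 : Real.cos (2*π*(6:ℝ)/16) = -(Real.sqrt 2 / 2) := by
    rw [show (2*π*(6:ℝ)/16) = π - π/4 by ring, Real.cos_pi_sub, Real.cos_pi_div_four]
  have h7 : Real.cos (2*π*(7:ℝ)/16) = -Real.cos (π/8) := by
    rw [show (2*π*(7:ℝ)/16) = π - π/8 by ring, Real.cos_pi_sub]
  have h8 : Real.cos (2*π*(8:ℝ)/16) = -1 := by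
    rw [show (2*π*(8:ℝ)/16) = π by ring, Real.cos_pi]
  have h9 : Real.cos (2*π*(9:ℝ)/16) = -Real.cos (π/8) := by
    rw [show (2*π*(9:ℝ)/16) = 2*π - (π - π/8) by ring, Real.cos_two_pi_sub, Real.cos_pi_sub]
  have h10 : Real.cos (2*π*(10:ℝ)/16) = -(Real.sqrt 2 / 2) := by
    rw [show (2*π*(10:ℝ)/16) = 2*π - (π - π/4) by ring, Real.cos_two_pi_sub,
      Real.cos_pi_sub, Real.cos_pi_div_four]
  have h11 : Real.cos (2*π*(11:ℝ)/16) = -Real.cos (3*π/8) := by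
    rw [show (2*π*(11:ℝ)/16) = 2*π - (π - 3*π/8) by ring, Real.cos_two_pi_sub, Real.cos_pi_sub]
  have h12 : Real.cos (2*π*(12:ℝ)/16) = 0 := by
    rw [show (2*π*(12:ℝ)/16) = 2*π - π/2 by ring, Real.cos_two_pi_sub, Real.cos_pi_div_two]
  have h13 : Real.cos (2*π*(13:ℝ)/16) = Real.cos (3*π/8) := by
    rw [show (2*π*(13:ℝ)/16) = 2*π - 3*π/8 by ring, Real.cos_two_pi_sub]
  have h14 : Real.cos (2*π*(14:ℝ)/16) = Real.sqrt 2 / 2 := by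
    rw [show (2*π*(14:ℝ)/16) = 2*π - π/4 by ring, Real.cos_two_pi_sub, Real.cos_pi_div_four]
  have h15 : Real.cos (2*π*(15:ℝ)/16) = Real.cos (π/8) := by
    rw [show (2*π*(15:ℝ)/16) = 2*π - π/8 by ring, Real.cos_two_pi_sub]
  set s := Real.sqrt 2 with hsdef
  set u := s * Real.cos (π/8) with hudef
  set v := s * Real.cos (3*π/8) with hvdef
  have hs : s^2 = 2 := Real.sq_sqrt (by norm_num)
  have hu : u^2 = 1 + s/2 := by
    rw [hudef, mul_pow, hs, Real.cos_sq, show 2*(π/8) = π/4 by ring, Real.cos_pi_div_four]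
    ring
  have hv : v^2 = 1 - s/2 := by
    rw [hvdef, mul_pow, hs, Real.cos_sq, show 2*(3*π/8) = π - π/4 by ring,
      Real.cos_pi_sub, Real.cos_pi_div_four]
    ring
  have pair : ∀ c y : ℝ, (y^2 - c*y + 1)*(y^2 + c*y + 1) = y^4 + (2 - c^2)*y^2 + 1 := by
    intros; ring
  rw [show (16:ℕ) = 15+1 from rfl]
  simp only [Finset.prod_range_succ, Finset.prod_range_zero, Nat.cast_ofNat,
    Nat.cast_zero, Nat.cast_one]
  rw [h0, h1, h2, h3, h4, h5, h6, h7, h8, h9, h10, h11, h12, h13, h14, h15]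
  rw [show s * (1:ℝ) = s by ring, show s * (-1:ℝ) = -s by ring,
    show s * (0:ℝ) = 0 by ring,
    show s * (s/2) = (1:ℝ) by linear_combination hs/2,
    show s * -(s/2) = (-1:ℝ) by linear_combination -hs/2,
    show s * Real.cos (π/8) = u from hudef.symm,
    show s * -Real.cos (π/8) = -u by rw [hudef]; ring,
    show s * Real.cos (3*π/8) = v from hvdef.symm,
    show s * -Real.cos (3*π/8) = -v by rw [hvdef]; ring]
  trans (((x^2 - s*x + 1)*(x^2 + s*x + 1)) *
      (((x^2 - u*x + 1)*(x^2 + u*x + 1)) * ((x^2 - v*x + 1)*(x^2 + v*x + 1)))^2 *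
      ((x^2 - 1*x + 1)*(x^2 + 1*x + 1))^2 * ((x^2 + 1)*(x^2 + 1)))
  · ring
  · rw [pair, pair, pair, pair, hs, hu, hv]
    have hoct : (x^4 + (2 - (1 + s/2))*x^2 + 1) * (x^4 + (2 - (1 - s/2))*x^2 + 1)
        = x^8 + 2*x^6 + (5/2)*x^4 + 2*x^2 + 1 := by
      linear_combination (-(x^4)/4) * hs
    rw [hoct]
    ring

theorem hadamard_charpoly_C16_not_integral :
    let f : Polynomial ℝ := ∏ k ∈ Finset.range 16,
      (X ^ 2 - C (Real.sqrt 2 * Real.cos (2 * π * k / 16)) * X + 1)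
    f.Monic ∧ (∀ i : ℕ, ∃ q : ℚ, f.coeff i = (q : ℝ)) ∧
      f.coeff 24 = 901 / 4 ∧ ¬ (∀ i : ℕ, ∃ m : ℤ, f.coeff i = (m : ℝ)) := by
  intro f
  have hf : f = QpAux.map (algebraMap ℚ ℝ) := by
    apply Polynomial.funext
    intro x
    rw [QpAux_map]
    show Polynomial.eval x (∏ k ∈ Finset.range 16,
      (X ^ 2 - C (Real.sqrt 2 * Real.cos (2 * π * k / 16)) * X + 1)) = _
    rw [Polynomial.eval_prod]
    simp only [eval_add, eval_sub, eval_mul, eval_pow, eval_X, eval_C, eval_one]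
    rw [key_eval x, RpAux_eval x]
  have h24 : f.coeff 24 = 901 / 4 := by
    rw [hf, Polynomial.coeff_map, QpAux_coeff24, eq_ratCast]
    norm_num
  refine ⟨?_, ?_, h24, ?_⟩
  · rw [hf]; exact QpAux_monic.map _
  · intro i
    exact ⟨QpAux.coeff i, by rw [hf, Polynomial.coeff_map, eq_ratCast]⟩
  · intro h
    obtain ⟨m, hm⟩ := h 24
    rw [h24] at hm
    have h4 : (901 : ℝ) = 4 * m := by linarith
    have h4' : (901 : ℤ) = 4 * m := by exact_mod_cast h4
    omega
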